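/- Let n ∈ ℕ, let β, γ ∈ ℝ and Δt > 0, and let M₁, K₁, K₂ be n × n real matrices with M₁ invertible. Define the Schur complement S = M₁ + (βM₁ + γK₂)·M₁⁻¹·(Δt·K₁) and its approximation Ŝ = (M₁ + √Δt·(βM₁ + γK₂))·M₁⁻¹·(M₁ + √Δt·K₁). Then Ŝ = S + √Δt·(βM₁ + γK₂ + K₁); in particular the approximation error Ŝ − S equals √Δt times the Δt-independent matrix βM₁ + γK₂ + K₁. -/
import Mathlib


theorem stmt_11 (n : ℕ) (β γ Δt : ℝ) (hΔt : 0 < Δt)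
    (M₁ K₁ K₂ : Matrix (Fin n) (Fin n) ℝ) (hM : IsUnit M₁.det)
    (S Sh : Matrix (Fin n) (Fin n) ℝ)
    (hS : S = M₁ + (β • M₁ + γ • K₂) * M₁⁻¹ * (Δt • K₁))
    (hSh : Sh = (M₁ + Real.sqrt Δt • (β • M₁ + γ • K₂)) * M₁⁻¹ * (M₁ + Real.sqrt Δt • K₁)) :
    Sh = S + Real.sqrt Δt • (β • M₁ + γ • K₂ + K₁) := by
  have h1 : M₁ * M₁⁻¹ = 1 := Matrix.mul_nonsing_inv M₁ hM
  have h2 : M₁⁻¹ * M₁ = 1 := Matrix.nonsing_inv_mul M₁ hM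
  have hsq : Real.sqrt Δt * Real.sqrt Δt = Δt := Real.mul_self_sqrt hΔt.le
  subst hS hSh
  simp only [Matrix.add_mul, Matrix.mul_add, Matrix.mul_smul, Matrix.smul_mul, h1, h2,
    Matrix.mul_one, Matrix.one_mul, smul_smul, smul_add, Matrix.mul_assoc]
  simp only [← mul_assoc, hsq, h2, Matrix.mul_one]
  abel
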